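/- Let d : ℝ → ℝ be nondecreasing and Lipschitz with constant c ≥ 0, let l > 0, β̄ ∈ (0,1], Δt > 0 satisfy Δt·c ≤ l·β̄. Then for any fixed a, R ∈ ℝ, the function x ↦ x + Δt·d((a − x/β̄ + R)/l) is nondecreasing on ℝ. -/

import Mathlib

/-- **Key scalar monotonicity computation (demand side), case (iii) of the proof of
Lemma 2.**  Let `d : ℝ → ℝ` be nondecreasing and Lipschitz with constant `c ≥ 0`,
let `l > 0`, `β̄ ∈ (0,1]`, `Δt > 0` satisfy `Δt·c ≤ l·β̄`.  Then for any fixed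
`a, R ∈ ℝ`, the function `x ↦ x + Δt·d((a − x/β̄ + R)/l)` is nondecreasing on `ℝ`. -/
theorem demand_update_monotone (d : ℝ → ℝ) (c l βbar Δt a R : ℝ)
    (hc : 0 ≤ c)
    (hd_mono : Monotone d)
    (hd_lip : LipschitzWith c.toNNReal d)
    (hl : 0 < l) (hβbar0 : 0 < βbar) (hβbar1 : βbar ≤ 1) (hΔt : 0 < Δt)
    (hstab : Δt * c ≤ l * βbar) :
    Monotone (fun x : ℝ => x + Δt * d ((a - x / βbar + R) / l)) := by
  intro x y hxy
  simp only
  set ux := (a - x / βbar + R) / l with hux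
  set uy := (a - y / βbar + R) / l with huy
  have huyx : uy ≤ ux := by
    have h : x / βbar ≤ y / βbar := div_le_div_of_nonneg_right hxy hβbar0.le
    apply div_le_div_of_nonneg_right _ hl.le
    linarith
  have hdiff : ux - uy = (y - x) / (βbar * l) := by
    rw [hux, huy]
    field_simp
    ring
  have hlip : d ux - d uy ≤ c * (ux - uy) := by
    have := hd_lip.dist_le_mul ux uy
    rw [Real.dist_eq, Real.dist_eq] at this
    have habs : |d ux - d uy| ≤ c * |ux - uy| := by
      simpa [Real.coe_toNNReal c hc] using this
    calc d ux - d uy ≤ |d ux - d uy| := le_abs_self _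
      _ ≤ c * |ux - uy| := habs
      _ = c * (ux - uy) := by rw [abs_of_nonneg (by linarith)]
  have key : Δt * (d ux - d uy) ≤ y - x := by
    have h1 : Δt * (d ux - d uy) ≤ Δt * (c * (ux - uy)) :=
      mul_le_mul_of_nonneg_left hlip hΔt.le
    have h2 : Δt * (c * (ux - uy)) = (Δt * c) * ((y - x) / (βbar * l)) := by
      rw [hdiff]; ring
    have hpos : 0 < βbar * l := mul_pos hβbar0 hl
    have h3 : (Δt * c) * ((y - x) / (βbar * l)) ≤ (l * βbar) * ((y - x) / (βbar * l)) :=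
      mul_le_mul_of_nonneg_right hstab (div_nonneg (by linarith) hpos.le)
    have h4 : (l * βbar) * ((y - x) / (βbar * l)) = y - x := by
      field_simp
    linarith
  linarith
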